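/- arXiv:2406.12132 — 3 statements merged into one kernel-verified Lean document; each statement's English description precedes it below -/
import Mathlib

section
/- There is an algebra homomorphism φ_ε from the specialized type B Hecke algebra H_{1,q}(B_n) to TL(B_n)_ε sending s₀ ↦ s₀ and H_i ↦ U_i + εq^{-ε}; i.e., the elements s₀ and U_i + εq^{-ε} of TL(B_n)_ε satisfy the type B Hecke relations. -/
/-! There is an algebra homomorphism from the specialized type `B` Hecke
algebra `H_{1,q}(B)` to `TL(B)_ε` sending `s₀ ↦ s₀` and `H_i ↦ U_i + ε q^{-ε}`. -/

noncomputable section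

abbrev Kq : Type := RatFunc ℂ

def qq : Kq := RatFunc.X

/-- The quantum integer `[m] = (q^m - q^{-m})/(q - q⁻¹)` in `ℂ(q)`. -/
def qint (m : ℤ) : Kq := (qq ^ m - qq ^ (-m)) / (qq - qq⁻¹)

/-- Generators of the type `B` Temperley–Lieb algebra: `none` is `s₀`, and
`some i` is the cup-cap generator `U_{i+1}`. -/
def g : Option ℕ → FreeAlgebra Kq (Option ℕ) := FreeAlgebra.ι Kq

/-- The defining relations of the (specialized) type `B` Temperley–Lieb
algebra (on infinitely many strands, so that `TL(B_n)` sits inside for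
every `n`): `U_i² = -ε(q+q⁻¹)U_i`, distant commutativity,
`U_i U_{i±1} U_i = U_i`, `s₀² = 1`, `U₁ s₀ U₁ = 0` and `s₀ U_i = U_i s₀`
for `i ≥ 2`.  (Recall `some i` stands for `U_{i+1}`.) -/
inductive TLBRel (ε : Kq) : FreeAlgebra Kq (Option ℕ) → FreeAlgebra Kq (Option ℕ) → Prop
  | Usq (i : ℕ) :
      TLBRel ε (g (some i) * g (some i)) ((-(ε * (qq + qq⁻¹))) • g (some i))
  | Ucomm (i j : ℕ) (h : i + 2 ≤ j) :
      TLBRel ε (g (some i) * g (some j)) (g (some j) * g (some i))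
  | Ubraid1 (i : ℕ) :
      TLBRel ε (g (some i) * g (some (i+1)) * g (some i)) (g (some i))
  | Ubraid2 (i : ℕ) :
      TLBRel ε (g (some (i+1)) * g (some i) * g (some (i+1))) (g (some (i+1)))
  | s0sq : TLBRel ε (g none * g none) 1
  | UsU : TLBRel ε (g (some 0) * g none * g (some 0)) 0
  | scomm (i : ℕ) (h : 1 ≤ i) :
      TLBRel ε (g none * g (some i)) (g (some i) * g none)

/-- The (specialized) type `B` Temperley–Lieb algebra `TL(B)_ε` (on
infinitely many strands). -/
abbrev TLB (ε : Kq) := RingQuot (TLBRel ε)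

/-- The generator `s₀` of `TL(B)_ε`. -/
def s0 (ε : Kq) : TLB ε := RingQuot.mkAlgHom Kq (TLBRel ε) (g none)

/-- The generator `U_i` of `TL(B)_ε`, for `i ≥ 1`. -/
def UU (ε : Kq) (i : ℕ) : TLB ε := RingQuot.mkAlgHom Kq (TLBRel ε) (g (some (i - 1)))

/-- The subalgebra `TL(B_n)_ε ⊆ TL(B)_ε`, generated by `s₀, U₁, …, U_{n-1}`. -/
def TLBsub (ε : Kq) (n : ℕ) : Subalgebra Kq (TLB ε) :=
  Algebra.adjoin Kq ({s0 ε} ∪ {x | ∃ i, 1 ≤ i ∧ i ≤ n - 1 ∧ x = UU ε i})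

/-- The type `D` generators: `UD 0 = U₀ = s₀U₁s₀` and `UD i = U_i` for `i ≥ 1`. -/
def UD (ε : Kq) (i : ℕ) : TLB ε :=
  if i = 0 then s0 ε * UU ε 1 * s0 ε else UU ε i

/-- The subalgebra `TL(D_n)_ε ⊆ TL(B)_ε`, generated by `U₀, U₁, …, U_{n-1}`. -/
def TLDsub (ε : Kq) (n : ℕ) : Subalgebra Kq (TLB ε) :=
  Algebra.adjoin Kq {x | ∃ i ≤ n - 1, x = UD ε i}

/-- The type `B_n` Jones–Wenzl projectors `b_{n,η,ε}` (for `η = ±1`), defined by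
`b_{1,η,ε} = (1 + η s₀)/2` and the recursion
`b_{n+1,η,ε} = b_{n,η,ε} + ε (q^{n-1}+q^{-(n-1)})/(q^n+q^{-n}) · b_{n,η,ε} U_n b_{n,η,ε}`. -/
def bB (ε η : Kq) : ℕ → TLB ε
  | 0 => 1
  | 1 => (2 : Kq)⁻¹ • (1 + η • s0 ε)
  | (n+2) =>
      bB ε η (n+1) +
        (ε * (qq ^ n + qq⁻¹ ^ n) / (qq ^ (n+1) + qq⁻¹ ^ (n+1))) •
          (bB ε η (n+1) * UU ε (n+1) * bB ε η (n+1))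

/-- The type `D_n` Jones–Wenzl projector `d_{n,ε} = b_{n,+,ε} + b_{n,-,ε}`. -/
def dD (ε : Kq) (n : ℕ) : TLB ε := bB ε 1 n + bB ε (-1) n

/-- The defining relations of the specialized type `B` Hecke algebra:
`H_i² = 1 + (q⁻¹-q)H_i`, braid relations, distant commutativity, `s₀² = 1`,
`s₀H₁s₀H₁ = H₁s₀H₁s₀`, and `s₀H_i = H_is₀` for `i ≥ 2`.
(`none` is `s₀`, `some i` is `H_{i+1}`.) -/
inductive HeckeRel : FreeAlgebra Kq (Option ℕ) → FreeAlgebra Kq (Option ℕ) → Prop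
  | Hsq (i : ℕ) :
      HeckeRel (g (some i) * g (some i)) (1 + (qq⁻¹ - qq) • g (some i))
  | Hbraid (i : ℕ) :
      HeckeRel (g (some i) * g (some (i+1)) * g (some i))
        (g (some (i+1)) * g (some i) * g (some (i+1)))
  | Hcomm (i j : ℕ) (h : i + 2 ≤ j) :
      HeckeRel (g (some i) * g (some j)) (g (some j) * g (some i))
  | s0sq : HeckeRel (g none * g none) 1
  | refl :
      HeckeRel (g none * g (some 0) * g none * g (some 0))
        (g (some 0) * g none * g (some 0) * g none)
  | scomm (i : ℕ) (h : 1 ≤ i) :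
      HeckeRel (g none * g (some i)) (g (some i) * g none)

/-- The specialized type `B` Hecke algebra `H_{1,q}(B)`. -/
abbrev Hecke := RingQuot HeckeRel

/-- The generator `s₀` of the Hecke algebra. -/
def sH : Hecke := RingQuot.mkAlgHom Kq HeckeRel (g none)

/-- The generator `H_i` of the Hecke algebra, for `i ≥ 1`. -/
def HH (i : ℕ) : Hecke := RingQuot.mkAlgHom Kq HeckeRel (g (some (i - 1)))

section AuxGeneric

variable {R A : Type} [CommRing R] [Ring A] [Algebra R A]

lemma quad_rel (u : A) (δ c d : R) (hu : u * u = -(δ • u))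
    (h2 : -δ + 2 * c = d) (h1 : c * c = 1 + d * c) :
    (u + c • 1) * (u + c • 1) = 1 + d • (u + c • 1) := by
  have hu : u * u = (-δ) • u := by rw [neg_smul]; exact hu
  simp only [mul_add, add_mul, smul_mul_assoc, mul_smul_comm, one_mul, mul_one,
    smul_smul, smul_add, hu]
  match_scalars <;> first
    | linear_combination h1
    | linear_combination h2

lemma braid_rel (u v : A) (δ c : R) (hu : u * u = -(δ • u)) (hv : v * v = -(δ • v))
    (huv : u * (v * u) = u) (hvu : v * (u * v) = v)
    (h3 : 1 + -δ * c + c * c = 0) :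
    (u + c • 1) * (v + c • 1) * (u + c • 1)
      = (v + c • 1) * (u + c • 1) * (v + c • 1) := by
  have hu : u * u = (-δ) • u := by rw [neg_smul]; exact hu
  have hv : v * v = (-δ) • v := by rw [neg_smul]; exact hv
  simp only [mul_add, add_mul, smul_mul_assoc, mul_smul_comm, one_mul, mul_one,
    smul_smul, smul_add, mul_assoc]
  rw [huv, hvu, hu, hv]
  match_scalars <;> first
    | linear_combination h3
    | linear_combination -h3
    | linear_combination c * h3
    | linear_combination -c * h3
    | linear_combination

lemma comm_rel (u w : A) (c : R) (huw : u * w = w * u) :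
    (u + c • 1) * (w + c • 1) = (w + c • 1) * (u + c • 1) := by
  simp only [mul_add, add_mul, smul_mul_assoc, mul_smul_comm, one_mul, mul_one,
    smul_smul, huw]
  match_scalars <;> linear_combination

lemma refl_rel (s u : A) (c : R) (hs : s * s = 1) (h0 : u * (s * u) = 0) :
    s * (u + c • 1) * s * (u + c • 1) = (u + c • 1) * s * (u + c • 1) * s := by
  have e1 : s * (u * (s * u)) = 0 := by rw [h0, mul_zero]
  have e2 : u * (s * (u * s)) = 0 := by
    rw [show u * (s * (u * s)) = u * (s * u) * s by noncomm_ring, h0, zero_mul]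
  have e3 : s * (s * u) = u := by rw [← mul_assoc, hs, one_mul]
  have e4 : u * (s * s) = u := by rw [hs, mul_one]
  simp only [mul_add, add_mul, smul_mul_assoc, mul_smul_comm, one_mul, mul_one,
    smul_smul, mul_assoc]
  rw [e1, e2, e3, e4, hs]
  match_scalars <;> linear_combination

lemma scomm_rel (s u : A) (c : R) (h : s * u = u * s) :
    s * (u + c • 1) = (u + c • 1) * s := by
  simp only [mul_add, add_mul, smul_mul_assoc, mul_smul_comm, one_mul, mul_one, h]

end AuxGeneric

section AuxTLB

/-- The image of `g (some i)` in `TL(B)_ε`. -/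
def uu (ε : Kq) (i : ℕ) : TLB ε := RingQuot.mkAlgHom Kq (TLBRel ε) (g (some i))

lemma uu_sq (ε : Kq) (i : ℕ) :
    uu ε i * uu ε i = -((ε * (qq + qq⁻¹)) • uu ε i) := by
  have := RingQuot.mkAlgHom_rel Kq (TLBRel.Usq (ε := ε) i)
  simpa [uu, map_mul, map_smul] using this

lemma uu_comm (ε : Kq) (i j : ℕ) (h : i + 2 ≤ j) :
    uu ε i * uu ε j = uu ε j * uu ε i := by
  have := RingQuot.mkAlgHom_rel Kq (TLBRel.Ucomm (ε := ε) i j h)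
  simpa [uu, map_mul] using this

lemma uu_braid1 (ε : Kq) (i : ℕ) :
    uu ε i * (uu ε (i+1) * uu ε i) = uu ε i := by
  have := RingQuot.mkAlgHom_rel Kq (TLBRel.Ubraid1 (ε := ε) i)
  simpa [uu, map_mul, mul_assoc] using this

lemma uu_braid2 (ε : Kq) (i : ℕ) :
    uu ε (i+1) * (uu ε i * uu ε (i+1)) = uu ε (i+1) := by
  have := RingQuot.mkAlgHom_rel Kq (TLBRel.Ubraid2 (ε := ε) i)
  simpa [uu, map_mul, mul_assoc] using this

lemma s0_sq (ε : Kq) : s0 ε * s0 ε = 1 := by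
  have := RingQuot.mkAlgHom_rel Kq (TLBRel.s0sq (ε := ε))
  simpa [s0, map_mul] using this

lemma usu (ε : Kq) : uu ε 0 * (s0 ε * uu ε 0) = 0 := by
  have := RingQuot.mkAlgHom_rel Kq (TLBRel.UsU (ε := ε))
  simpa [uu, s0, map_mul, mul_assoc] using this

lemma s_comm (ε : Kq) (i : ℕ) (h : 1 ≤ i) :
    s0 ε * uu ε i = uu ε i * s0 ε := by
  have := RingQuot.mkAlgHom_rel Kq (TLBRel.scomm (ε := ε) i h)
  simpa [uu, s0, map_mul] using this

/-- The candidate images of the generators. -/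
def Fgen (ε c : Kq) : Option ℕ → TLB ε
  | none => s0 ε
  | some i => uu ε i + c • 1

/-- The lift of `Fgen` to the free algebra. -/
def Fmap (ε c : Kq) : FreeAlgebra Kq (Option ℕ) →ₐ[Kq] TLB ε :=
  FreeAlgebra.lift Kq (Fgen ε c)

lemma Fmap_g (ε c : Kq) (o : Option ℕ) : Fmap ε c (g o) = Fgen ε c o := by
  simp [Fmap, g, FreeAlgebra.lift_ι_apply]

lemma Fmap_rel (ε c : Kq)
    (h1 : c * c = 1 + (qq⁻¹ - qq) * c)
    (h2 : -(ε * (qq + qq⁻¹)) + 2 * c = qq⁻¹ - qq)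
    {a b : FreeAlgebra Kq (Option ℕ)} (h : HeckeRel a b) :
    Fmap ε c a = Fmap ε c b := by
  have h3 : 1 + -(ε * (qq + qq⁻¹)) * c + c * c = 0 := by
    linear_combination c * h2 - h1
  induction h with
  | Hsq i =>
      simp only [map_mul, map_add, map_one, map_smul, Fmap_g, Fgen]
      exact quad_rel _ _ _ _ (uu_sq ε i) h2 h1
  | Hbraid i =>
      simp only [map_mul, Fmap_g, Fgen]
      exact braid_rel _ _ _ _ (uu_sq ε i) (uu_sq ε (i+1))
        (uu_braid1 ε i) (uu_braid2 ε i) h3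
  | Hcomm i j h =>
      simp only [map_mul, Fmap_g, Fgen]
      exact comm_rel _ _ _ (uu_comm ε i j h)
  | s0sq =>
      simp only [map_mul, map_one, Fmap_g, Fgen, s0_sq]
  | refl =>
      simp only [map_mul, Fmap_g, Fgen]
      exact refl_rel _ _ _ (s0_sq ε) (usu ε)
  | scomm i h =>
      simp only [map_mul, Fmap_g, Fgen]
      exact scomm_rel _ _ _ (s_comm ε i h)

lemma key (ε c : Kq)
    (h1 : c * c = 1 + (qq⁻¹ - qq) * c)
    (h2 : -(ε * (qq + qq⁻¹)) + 2 * c = qq⁻¹ - qq) :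
    ∃ φ : Hecke →ₐ[Kq] TLB ε,
      φ sH = s0 ε ∧ ∀ i : ℕ, 1 ≤ i → φ (HH i) = UU ε i + algebraMap Kq (TLB ε) c := by
  refine ⟨RingQuot.liftAlgHom Kq ⟨Fmap ε c, fun a b h => Fmap_rel ε c h1 h2 h⟩, ?_, ?_⟩
  · rw [sH, RingQuot.liftAlgHom_mkAlgHom_apply, Fmap_g]
    rfl
  · intro i hi
    rw [HH, RingQuot.liftAlgHom_mkAlgHom_apply, Fmap_g]
    show uu ε (i-1) + c • 1 = UU ε i + _
    rw [Algebra.algebraMap_eq_smul_one]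
    rfl

end AuxTLB
theorem stmt9 (ε : ℤ) (hε : ε = 1 ∨ ε = -1) :
    ∃ φ : Hecke →ₐ[Kq] TLB (ε : Kq),
      φ sH = s0 (ε : Kq) ∧
      ∀ i : ℕ, 1 ≤ i →
        φ (HH i) = UU (ε : Kq) i
          + algebraMap Kq (TLB (ε : Kq)) ((ε : Kq) * qq ^ (-ε)) := by
  have hq : (qq : Kq) ≠ 0 := RatFunc.X_ne_zero
  refine key (ε : Kq) ((ε : Kq) * qq ^ (-ε)) ?_ ?_
  · rcases hε with h | h <;> subst h
    · push_cast
      rw [zpow_neg, zpow_one, one_mul]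
      field_simp
      ring
    · norm_num
      field_simp
      ring
  · rcases hε with h | h <;> subst h
    · push_cast
      rw [zpow_neg, zpow_one, one_mul]
      field_simp
      ring
    · norm_num
      field_simp
      ring

end
end

section
/- In TL(B_2)_ε, the elements U₁ + εq^{-ε} and s₀ satisfy the reflection equation: (s₀)(U₁+εq^{-ε})(s₀)(U₁+εq^{-ε}) = (U₁+εq^{-ε})(s₀)(U₁+εq^{-ε})(s₀). -/
/-! In `TL(B₂)_ε`, the elements `H = U₁ + εq^{-ε}` and `s₀` satisfy the
reflection equation `s₀Hs₀H = Hs₀Hs₀`. -/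

noncomputable section

theorem stmt10 (ε : ℤ) (hε : ε = 1 ∨ ε = -1) (H : TLB (ε : Kq))
    (hH : H = UU (ε : Kq) 1 + algebraMap Kq (TLB (ε : Kq)) ((ε : Kq) * qq ^ (-ε))) :
    s0 (ε : Kq) * H * s0 (ε : Kq) * H = H * s0 (ε : Kq) * H * s0 (ε : Kq) := by
  set e : Kq := (ε : Kq)
  set s := s0 e with hsdef
  set U := UU e 1 with hUdef
  have hs : s * s = 1 := by
    have := RingQuot.mkAlgHom_rel Kq (TLBRel.s0sq (ε := e))
    simpa [hsdef, s0, map_mul] using this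
  have hU : U * (s * U) = 0 := by
    have := RingQuot.mkAlgHom_rel Kq (TLBRel.UsU (ε := e))
    simpa [hUdef, hsdef, UU, s0, map_mul, mul_assoc] using this
  have hU2 : U * (s * (U * s)) = 0 := by
    calc U * (s * (U * s)) = (U * (s * U)) * s := by noncomm_ring
    _ = 0 := by rw [hU, zero_mul]
  have hss : ∀ x : TLB e, s * (s * x) = x := by
    intro x
    rw [← mul_assoc, hs, one_mul]
  rw [hH, Algebra.algebraMap_eq_smul_one]
  simp only [mul_add, add_mul, smul_mul_assoc, mul_smul_comm, mul_assoc, one_mul, mul_one,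
    hss, hs, hU, hU2, mul_zero, zero_mul, smul_zero, add_zero, zero_add, smul_smul, smul_add]
  abel

end
end

section
/- For each n ≥ 1, the type B_n Jones–Wenzl projector b_{n,η,ε} (for η ∈ {+,-}) is the unique non-zero idempotent x in TL(B_n)_ε satisfying s₀x = ηx = xs₀ and U_ix = 0 = xU_i for all i = 1,…,n-1. -/
/-! The type `B_n` Jones–Wenzl projector `b_{n,η,ε}` is the unique non-zero
idempotent `x` in `TL(B_n)_ε` satisfying `s₀x = ηx = xs₀` and
`U_ix = 0 = xU_i` for all `i = 1,…,n-1`. -/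

noncomputable section

section Aux

lemma qq_ne : qq ≠ 0 := RatFunc.X_ne_zero

lemma Dk_ne (k : ℕ) : qq ^ k + qq⁻¹ ^ k ≠ 0 := by
  intro h
  have h2 : qq ^ k * (qq ^ k + qq⁻¹ ^ k) = qq ^ (2 * k) + 1 := by
    field_simp [qq_ne]
    rw [mul_add, ← mul_pow qq (1 / qq), mul_one_div_cancel qq_ne, one_pow]
    ring
  rw [h, mul_zero] at h2
  have : (algebraMap (Polynomial ℂ) Kq) (Polynomial.X ^ (2 * k) + 1) = 0 := by
    rw [map_add, map_pow, map_one, RatFunc.algebraMap_X]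
    exact h2.symm
  have hne : (Polynomial.X ^ (2 * k) + 1 : Polynomial ℂ) ≠ 0 := by
    intro hx
    have h0 := congrArg (Polynomial.eval 0) hx
    rcases Nat.eq_zero_or_pos k with rfl | hk
    · simp at h0
    · rw [Polynomial.eval_add, Polynomial.eval_pow, Polynomial.eval_X,
        Polynomial.eval_one, Polynomial.eval_zero, zero_pow (by omega), zero_add] at h0
      exact one_ne_zero h0
  exact RatFunc.algebraMap_ne_zero hne this

lemma two_ne : (2 : Kq) ≠ 0 := by
  have h := RatFunc.algebraMap_ne_zero (K := ℂ) (x := (2 : Polynomial ℂ)) (by norm_num)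
  rwa [map_ofNat] at h

/-- coefficient in the recursion -/
def CC (ε : Kq) (n : ℕ) : Kq := ε * (qq ^ n + qq⁻¹ ^ n) / (qq ^ (n+1) + qq⁻¹ ^ (n+1))

/-- sandwich eigenvalue -/
def TT (ε : Kq) (n : ℕ) : Kq := -(ε * (qq ^ (n+1) + qq⁻¹ ^ (n+1)) / (qq ^ n + qq⁻¹ ^ n))

lemma CT (ε : Kq) (hε : ε * ε = 1) (n : ℕ) : CC ε n * TT ε n = -1 := by
  have hA := Dk_ne n; have hB := Dk_ne (n+1)
  unfold CC TT
  rw [mul_neg, div_mul_div_comm,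
    show ε * (qq ^ n + qq⁻¹ ^ n) * (ε * (qq ^ (n+1) + qq⁻¹ ^ (n+1)))
      = (qq ^ (n+1) + qq⁻¹ ^ (n+1)) * (qq ^ n + qq⁻¹ ^ n) from by
        linear_combination ((qq ^ n + qq⁻¹ ^ n) * (qq ^ (n+1) + qq⁻¹ ^ (n+1))) * hε,
    div_self (mul_ne_zero hB hA)]

lemma TTsucc (ε : Kq) (n : ℕ) : TT ε (n+1) = -(ε * (qq + qq⁻¹)) + CC ε n := by
  have hB := Dk_ne (n+1)
  apply mul_right_cancel₀ hB
  rw [TT, CC, neg_mul, div_mul_cancel₀ _ hB, add_mul, div_mul_cancel₀ _ hB]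
  field_simp [qq_ne]
  linear_combination (ε * qq * qq⁻¹ ^ n - ε * qq⁻¹ * qq⁻¹ ^ n) * mul_inv_cancel₀ qq_ne

end Aux
section Rels

variable (ε : Kq)

lemma UU_succ (i : ℕ) : UU ε (i+1) = RingQuot.mkAlgHom Kq (TLBRel ε) (g (some i)) := by
  simp [UU]

lemma rel_Usq (i : ℕ) :
    UU ε (i+1) * UU ε (i+1) = (-(ε * (qq + qq⁻¹))) • UU ε (i+1) := by
  have := RingQuot.mkAlgHom_rel Kq (TLBRel.Usq (ε := ε) i)
  rw [map_mul, map_smul] at this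
  rw [UU_succ]; exact this

lemma rel_Ucomm (i j : ℕ) (h : i + 2 ≤ j) :
    UU ε (i+1) * UU ε (j+1) = UU ε (j+1) * UU ε (i+1) := by
  have := RingQuot.mkAlgHom_rel Kq (TLBRel.Ucomm (ε := ε) i j h)
  rw [map_mul, map_mul] at this
  rw [UU_succ, UU_succ]; exact this

lemma rel_braid2 (i : ℕ) :
    UU ε (i+2) * UU ε (i+1) * UU ε (i+2) = UU ε (i+2) := by
  have := RingQuot.mkAlgHom_rel Kq (TLBRel.Ubraid2 (ε := ε) i)
  rw [map_mul, map_mul] at this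
  rw [UU_succ, UU_succ]; exact this

lemma rel_s0sq : s0 ε * s0 ε = 1 := by
  have := RingQuot.mkAlgHom_rel Kq (TLBRel.s0sq (ε := ε))
  rw [map_mul, map_one] at this
  exact this

lemma rel_UsU : UU ε 1 * s0 ε * UU ε 1 = 0 := by
  have := RingQuot.mkAlgHom_rel Kq (TLBRel.UsU (ε := ε))
  rw [map_mul, map_mul, map_zero] at this
  exact this

lemma rel_scomm (i : ℕ) (h : 1 ≤ i) :
    s0 ε * UU ε (i+1) = UU ε (i+1) * s0 ε := by
  have := RingQuot.mkAlgHom_rel Kq (TLBRel.scomm (ε := ε) i h)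
  rw [map_mul, map_mul] at this
  rw [UU_succ]; exact this

end Rels
section Generic
variable {R A : Type} [CommRing R] [Ring A] [Algebra R A]

-- base case lemmas; b1 = c•(1+η•s)
lemma gen_base_idem (c η : R) (s : A) (hs : s * s = 1) (hη : η * η = 1) (hc : c + c = 1) :
    (c • (1 + η • s)) * (c • (1 + η • s)) = c • (1 + η • s) := by
  simp only [smul_mul_assoc, mul_smul_comm, mul_add, add_mul, one_mul, mul_one,
    hs, smul_add, smul_smul]
  match_scalars
  · linear_combination c*c*hη + c*hc
  · linear_combination c*η*hc

lemma gen_base_sL (c η : R) (s : A) (hs : s * s = 1) (hη : η * η = 1) :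
    s * (c • (1 + η • s)) = η • (c • (1 + η • s)) := by
  simp only [smul_mul_assoc, mul_smul_comm, mul_add, add_mul, one_mul, mul_one,
    hs, smul_add, smul_smul]
  match_scalars
  · linear_combination (-c)*hη
  · ring

lemma gen_base_sR (c η : R) (s : A) (hs : s * s = 1) (hη : η * η = 1) :
    (c • (1 + η • s)) * s = η • (c • (1 + η • s)) := by
  simp only [smul_mul_assoc, mul_smul_comm, mul_add, add_mul, one_mul, mul_one,
    hs, smul_add, smul_smul]
  match_scalars
  · linear_combination (-c)*hη
  · ring

lemma gen_base_sand (c η α τ : R) (s u : A) (huu : u * u = α • u)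
    (husu : u * s * u = 0) (hτ : τ = c * α) :
    u * (c • (1 + η • s)) * u = τ • ((1:A) * u) := by
  have h1 : u * (c • (1 + η • s)) * u = c • (u * u) + (c*η) • (u * s * u) := by
    simp only [smul_mul_assoc, mul_smul_comm, mul_add, add_mul, one_mul, mul_one,
      smul_add, smul_smul]
  rw [h1, huu, husu, smul_zero, add_zero, smul_smul, hτ, one_mul]

-- step lemmas; b' = b + C•(b*u*b)
lemma gen_step_annL (C : R) (b u v : A) (hv : v * b = 0) :
    v * (b + C • (b*u*b)) = 0 := by
  rw [mul_add, hv, mul_smul_comm, ← mul_assoc, ← mul_assoc, hv, zero_mul, zero_mul,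
    smul_zero, add_zero]

lemma gen_step_annR (C : R) (b u v : A) (hv : b * v = 0) :
    (b + C • (b*u*b)) * v = 0 := by
  rw [add_mul, hv, smul_mul_assoc, mul_assoc, mul_assoc, hv, mul_zero, mul_zero,
    smul_zero, add_zero]

lemma gen_step_uannL (C τ : R) (b bb u : A) (habs1 : bb * b = b)
    (hcom : u * bb = bb * u) (hsw : u * b * u = τ • (bb * u)) (hCT : C * τ = -1) :
    u * (b + C • (b*u*b)) = 0 := by
  have h1 : u * (b*u*b) = τ • (u * b) := by
    rw [← mul_assoc, ← mul_assoc, hsw, smul_mul_assoc, ← hcom, mul_assoc, habs1]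
  rw [mul_add, mul_smul_comm, h1, smul_smul, hCT, neg_one_smul, add_neg_cancel]

lemma gen_step_uannR (C τ : R) (b bb u : A) (habs2 : b * bb = b)
    (hsw : u * b * u = τ • (bb * u)) (hCT : C * τ = -1) :
    (b + C • (b*u*b)) * u = 0 := by
  have h1 : (b*u*b) * u = τ • (b * u) := by
    rw [mul_assoc, mul_assoc, ← mul_assoc u b u, hsw, mul_smul_comm, ← mul_assoc, habs2]
  rw [add_mul, smul_mul_assoc, h1, smul_smul, hCT, neg_one_smul, add_neg_cancel]

lemma gen_step_idem (C τ : R) (b bb u : A) (hb : b * b = b) (habs2 : b * bb = b)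
    (hsw : u * b * u = τ • (bb * u)) (hCT : C * τ = -1) :
    (b + C • (b*u*b)) * (b + C • (b*u*b)) = b + C • (b*u*b) := by
  have h2 : (b*u*b) * b = b*u*b := by rw [mul_assoc (b*u) b b, hb]
  have h3 : b * (b*u*b) = b*u*b := by rw [← mul_assoc, ← mul_assoc, hb]
  have h4 : (b*u*b) * (b*u*b) = τ • (b*u*b) := by
    rw [mul_assoc (b*u) b (b*u*b), h3, ← mul_assoc (b*u) (b*u) b, mul_assoc b u (b*u),
      ← mul_assoc u b u, hsw, mul_smul_comm, ← mul_assoc, habs2, smul_mul_assoc]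
  rw [mul_add, add_mul, add_mul, hb, mul_smul_comm, smul_mul_assoc, smul_mul_assoc,
    mul_smul_comm, h2, h3, h4, smul_smul, smul_smul, mul_assoc C C τ, hCT, mul_neg_one,
    neg_smul, add_assoc, add_neg_cancel, add_zero]

lemma gen_step_sL (C η : R) (b u s : A) (hsL : s * b = η • b) :
    s * (b + C • (b*u*b)) = η • (b + C • (b*u*b)) := by
  rw [mul_add, hsL, mul_smul_comm, ← mul_assoc, ← mul_assoc, hsL, smul_mul_assoc,
    smul_mul_assoc, smul_add, smul_comm η C]

lemma gen_step_sR (C η : R) (b u s : A) (hsR : b * s = η • b) :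
    (b + C • (b*u*b)) * s = η • (b + C • (b*u*b)) := by
  rw [add_mul, hsR, smul_mul_assoc, mul_assoc, mul_assoc, hsR, mul_smul_comm,
    mul_smul_comm, smul_add, smul_comm η C, ← mul_assoc]

lemma gen_step_absL (C : R) (b u : A) (hb : b * b = b) :
    b * (b + C • (b*u*b)) = b + C • (b*u*b) := by
  rw [mul_add, hb, mul_smul_comm, ← mul_assoc, ← mul_assoc, hb]

lemma gen_step_absR (C : R) (b u : A) (hb : b * b = b) :
    (b + C • (b*u*b)) * b = b + C • (b*u*b) := by
  rw [add_mul, hb, smul_mul_assoc, mul_assoc, mul_assoc, hb, ← mul_assoc]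

lemma gen_step_sand (C α τ' : R) (b u u' : A) (hb : b * b = b)
    (hcom : u' * b = b * u') (huu' : u' * u' = α • u') (hbr : u' * u * u' = u')
    (hτ' : τ' = α + C) :
    u' * (b + C • (b*u*b)) * u' = τ' • (b * u') := by
  have h1 : u' * b * u' = α • (b * u') := by
    rw [hcom, mul_assoc, huu', mul_smul_comm]
  have h2 : u' * (b*u*b) * u' = b * u' := by
    rw [← mul_assoc u' (b*u) b, ← mul_assoc u' b u, hcom,
      mul_assoc (b*u'*u) b u', mul_assoc (b*u') u (b*u')]
    nth_rewrite 2 [← hcom]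
    rw [← mul_assoc u u' b, ← mul_assoc (b*u') (u*u') b, mul_assoc b u' (u*u'),
      ← mul_assoc u' u u', hbr, mul_assoc b u' b, hcom, ← mul_assoc b b u', hb]
  have expand : u' * (b + C•(b*u*b)) * u' = u'*b*u' + C • (u' * (b*u*b) * u') := by
    rw [mul_add, add_mul, mul_smul_comm, smul_mul_assoc]
  rw [expand, h1, h2, hτ', add_smul]

-- uniqueness-side generic lemma
lemma gen_mul_smul (φz φy : R) (x y z : A) (hy : y * x = φy • x) (hz : z * x = φz • x) :
    (y * z) * x = (φy * φz) • x := by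
  rw [mul_assoc, hz, mul_smul_comm, hy, smul_smul, mul_comm φz φy]

lemma gen_mul_smul' (φz φy : R) (x y z : A) (hy : x * y = φy • x) (hz : x * z = φz • x) :
    x * (y * z) = (φy * φz) • x := by
  rw [← mul_assoc, hy, smul_mul_assoc, hz, smul_smul]

end Generic
set_option maxHeartbeats 1000000
set_option synthInstance.maxHeartbeats 200000

section Phi

/-- The counit `s₀ ↦ η`, `U_i ↦ 0`. -/
def phi (ε η : Kq) (hη : η * η = 1) : TLB ε →ₐ[Kq] Kq :=
  RingQuot.liftAlgHom Kq ⟨FreeAlgebra.lift Kq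
    (fun o => match o with | none => η | some _ => 0), by
      rintro x y h
      induction h <;>
        simp [g, FreeAlgebra.lift_ι_apply, hη, map_smul, smul_eq_mul]⟩

lemma phi_s0 (ε η : Kq) (hη : η * η = 1) : phi ε η hη (s0 ε) = η := by
  rw [phi, s0, RingQuot.liftAlgHom_mkAlgHom_apply, g, FreeAlgebra.lift_ι_apply]

lemma phi_UU (ε η : Kq) (hη : η * η = 1) (i : ℕ) : phi ε η hη (UU ε i) = 0 := by
  rw [phi, UU, RingQuot.liftAlgHom_mkAlgHom_apply, g, FreeAlgebra.lift_ι_apply]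

lemma phi_bB (ε η : Kq) (hη : η * η = 1) (n : ℕ) : phi ε η hη (bB ε η n) = 1 := by
  induction n using Nat.strong_induction_on with
  | _ n ih =>
    match n with
    | 0 => simp [bB]
    | 1 =>
      rw [bB, map_smul, map_add, map_one, map_smul, phi_s0, smul_eq_mul, smul_eq_mul, hη]
      rw [one_add_one_eq_two]; exact inv_mul_cancel₀ two_ne
    | (n+2) =>
      rw [bB, map_add, map_smul, map_mul, map_mul, phi_UU, mul_zero, zero_mul,
        smul_zero, add_zero]
      exact ih (n+1) (by omega)

lemma bB_ne_zero (ε η : Kq) (hη : η * η = 1) (n : ℕ) : bB ε η n ≠ 0 := by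
  intro h
  have := phi_bB ε η hη n
  rw [h, map_zero] at this
  exact one_ne_zero this.symm

end Phi

section Comm

lemma UU_comm_bB (ε η : Kq) : ∀ n m : ℕ, n + 1 ≤ m →
    UU ε m * bB ε η n = bB ε η n * UU ε m := by
  intro n
  induction n using Nat.strong_induction_on with
  | _ n ih =>
    match n with
    | 0 => intro m _; simp [bB]
    | 1 =>
      intro m hm
      have hm1 : m = (m - 1) + 1 := by omega
      have hc : s0 ε * UU ε m = UU ε m * s0 ε := by
        rw [hm1]; exact rel_scomm ε (m-1) (by omega)
      rw [bB, smul_mul_assoc, mul_smul_comm, mul_add, add_mul, mul_one, one_mul,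
        mul_smul_comm, smul_mul_assoc, hc]
    | (n+2) =>
      intro m hm
      have h1 : UU ε m * bB ε η (n+1) = bB ε η (n+1) * UU ε m :=
        ih (n+1) (by omega) m (by omega)
      have hm1 : m = (m - 1) + 1 := by omega
      have h2 : UU ε m * UU ε (n+1) = UU ε (n+1) * UU ε m := by
        rw [hm1]; exact (rel_Ucomm ε n (m-1) (by omega)).symm
      rw [bB, mul_add, add_mul, h1, mul_smul_comm, smul_mul_assoc]
      have key : UU ε m * (bB ε η (n+1) * UU ε (n+1) * bB ε η (n+1))
          = bB ε η (n+1) * UU ε (n+1) * bB ε η (n+1) * UU ε m := by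
        rw [← mul_assoc, ← mul_assoc, h1, mul_assoc (bB ε η (n+1)), h2, ← mul_assoc,
          mul_assoc _ (UU ε m), h1, ← mul_assoc]
      rw [key]

end Comm
section Main

lemma main_ind (ε η : Kq) (hε : ε * ε = 1) (hη : η * η = 1) : ∀ n : ℕ,
    bB ε η (n+1) * bB ε η (n+1) = bB ε η (n+1) ∧
    s0 ε * bB ε η (n+1) = η • bB ε η (n+1) ∧
    bB ε η (n+1) * s0 ε = η • bB ε η (n+1) ∧
    (∀ i : ℕ, 1 ≤ i → i ≤ n → UU ε i * bB ε η (n+1) = 0 ∧ bB ε η (n+1) * UU ε i = 0) ∧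
    bB ε η n * bB ε η (n+1) = bB ε η (n+1) ∧
    bB ε η (n+1) * bB ε η n = bB ε η (n+1) ∧
    UU ε (n+1) * bB ε η (n+1) * UU ε (n+1) = TT ε n • (bB ε η n * UU ε (n+1)) := by
  intro n
  have hc : (2:Kq)⁻¹ + (2:Kq)⁻¹ = 1 := by rw [← two_mul, mul_inv_cancel₀ two_ne]
  induction n with
  | zero =>
    have e0 : bB ε η 0 = 1 := rfl
    have e1 : bB ε η 1 = (2:Kq)⁻¹ • (1 + η • s0 ε) := rfl
    have rsq : UU ε 1 * UU ε 1 = (-(ε * (qq + qq⁻¹))) • UU ε 1 := rel_Usq ε 0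
    have hτ : TT ε 0 = (2:Kq)⁻¹ * (-(ε * (qq + qq⁻¹))) := by
      rw [TT]; norm_num; ring
    refine ⟨?_, ?_, ?_, ?_, ?_, ?_, ?_⟩
    · rw [e1]; exact gen_base_idem _ _ _ (rel_s0sq ε) hη hc
    · rw [e1]; exact gen_base_sL _ _ _ (rel_s0sq ε) hη
    · rw [e1]; exact gen_base_sR _ _ _ (rel_s0sq ε) hη
    · intro i h1 h2; omega
    · rw [e0, one_mul]
    · rw [e0, mul_one]
    · rw [e0, e1]
      exact gen_base_sand _ _ _ _ _ _ rsq (rel_UsU ε) hτ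
  | succ n IH =>
    obtain ⟨hb, hsL, hsR, hann, habs1, habs2, hsw⟩ := IH
    have e2 : bB ε η (n+1+1) = bB ε η (n+1) +
        CC ε n • (bB ε η (n+1) * UU ε (n+1) * bB ε η (n+1)) := rfl
    have hcom : UU ε (n+1) * bB ε η n = bB ε η n * UU ε (n+1) :=
      UU_comm_bB ε η n (n+1) (by omega)
    have hcom' : UU ε (n+1+1) * bB ε η (n+1) = bB ε η (n+1) * UU ε (n+1+1) :=
      UU_comm_bB ε η (n+1) (n+1+1) (by omega)
    have hCT : CC ε n * TT ε n = -1 := CT ε hε n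
    have huu' : UU ε (n+1+1) * UU ε (n+1+1) = (-(ε * (qq + qq⁻¹))) • UU ε (n+1+1) :=
      rel_Usq ε (n+1)
    have hbr : UU ε (n+1+1) * UU ε (n+1) * UU ε (n+1+1) = UU ε (n+1+1) := rel_braid2 ε n
    have hτ' : TT ε (n+1) = -(ε * (qq + qq⁻¹)) + CC ε n := TTsucc ε n
    refine ⟨?_, ?_, ?_, ?_, ?_, ?_, ?_⟩
    · rw [e2]; exact gen_step_idem _ _ _ _ _ hb habs2 hsw hCT
    · rw [e2]; exact gen_step_sL _ _ _ _ _ hsL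
    · rw [e2]; exact gen_step_sR _ _ _ _ _ hsR
    · intro i h1 h2
      rcases Nat.lt_or_ge i (n+1) with h | h
      · obtain ⟨hL, hR⟩ := hann i h1 (by omega)
        exact ⟨by rw [e2]; exact gen_step_annL _ _ _ _ hL,
               by rw [e2]; exact gen_step_annR _ _ _ _ hR⟩
      · have : i = n+1 := by omega
        subst this
        exact ⟨by rw [e2]; exact gen_step_uannL _ _ _ _ _ habs1 hcom hsw hCT,
               by rw [e2]; exact gen_step_uannR _ _ _ _ _ habs2 hsw hCT⟩
    · rw [e2]; exact gen_step_absL _ _ _ hb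
    · rw [e2]; exact gen_step_absR _ _ _ hb
    · rw [e2]; exact gen_step_sand _ _ _ _ _ _ hb hcom' huu' hbr hτ'

end Main
section Mem

lemma s0_mem (ε : Kq) (n : ℕ) : s0 ε ∈ TLBsub ε n :=
  Algebra.subset_adjoin (Or.inl rfl)

lemma UU_mem (ε : Kq) (n i : ℕ) (h1 : 1 ≤ i) (h2 : i ≤ n - 1) : UU ε i ∈ TLBsub ε n :=
  Algebra.subset_adjoin (Or.inr ⟨i, h1, h2, rfl⟩)

lemma TLBsub_mono (ε : Kq) {m n : ℕ} (h : m ≤ n) : TLBsub ε m ≤ TLBsub ε n := by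
  apply Algebra.adjoin_mono
  rintro x (hx | ⟨i, h1, h2, rfl⟩)
  · exact Or.inl hx
  · exact Or.inr ⟨i, h1, by omega, rfl⟩

lemma bB_mem (ε η : Kq) : ∀ n : ℕ, bB ε η n ∈ TLBsub ε n := by
  intro n
  induction n using Nat.strong_induction_on with
  | _ n ih =>
    match n with
    | 0 => exact one_mem _
    | 1 =>
      rw [show bB ε η 1 = (2:Kq)⁻¹ • (1 + η • s0 ε) from rfl]
      exact Subalgebra.smul_mem _ (add_mem (one_mem _)
        (Subalgebra.smul_mem _ (s0_mem ε 1) _)) _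
    | (n+2) =>
      rw [show bB ε η (n+2) = bB ε η (n+1) +
        CC ε n • (bB ε η (n+1) * UU ε (n+1) * bB ε η (n+1)) from rfl]
      have hb : bB ε η (n+1) ∈ TLBsub ε (n+2) :=
        TLBsub_mono ε (by omega) (ih (n+1) (by omega))
      have hu : UU ε (n+1) ∈ TLBsub ε (n+2) := UU_mem ε (n+2) (n+1) (by omega) (by omega)
      exact add_mem hb (Subalgebra.smul_mem _ (mul_mem (mul_mem hb hu) hb) _)

end Mem

section Char

lemma char_left (ε η : Kq) (hη : η * η = 1) (n : ℕ) (x : TLB ε)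
    (hs : s0 ε * x = η • x) (hU : ∀ i, 1 ≤ i → i ≤ n - 1 → UU ε i * x = 0) :
    ∀ y ∈ TLBsub ε n, y * x = (phi ε η hη y) • x := by
  intro y hy
  rw [TLBsub] at hy
  induction hy using Algebra.adjoin_induction with
  | mem z hz =>
    rcases hz with hz | ⟨i, h1, h2, rfl⟩
    · rw [Set.mem_singleton_iff] at hz; subst hz; rw [hs, phi_s0]
    · rw [hU i h1 h2, phi_UU, zero_smul]
  | algebraMap r => rw [← Algebra.smul_def, AlgHom.commutes, Algebra.algebraMap_self_apply]
  | add y z hy hz ihy ihz => rw [add_mul, ihy, ihz, map_add, add_smul]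
  | mul y z hy hz ihy ihz => rw [map_mul]; exact gen_mul_smul _ _ _ _ _ ihy ihz

lemma char_right (ε η : Kq) (hη : η * η = 1) (n : ℕ) (x : TLB ε)
    (hs : x * s0 ε = η • x) (hU : ∀ i, 1 ≤ i → i ≤ n - 1 → x * UU ε i = 0) :
    ∀ y ∈ TLBsub ε n, x * y = (phi ε η hη y) • x := by
  intro y hy
  rw [TLBsub] at hy
  induction hy using Algebra.adjoin_induction with
  | mem z hz =>
    rcases hz with hz | ⟨i, h1, h2, rfl⟩
    · rw [Set.mem_singleton_iff] at hz; subst hz; rw [hs, phi_s0]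
    · rw [hU i h1 h2, phi_UU, zero_smul]
  | algebraMap r =>
    rw [← Algebra.commutes, ← Algebra.smul_def, AlgHom.commutes, Algebra.algebraMap_self_apply]
  | add y z hy hz ihy ihz => rw [mul_add, ihy, ihz, map_add, add_smul]
  | mul y z hy hz ihy ihz => rw [map_mul]; exact gen_mul_smul' _ _ _ _ _ ihy ihz

end Char

theorem stmt11 (ε η : Kq) (hε : ε = 1 ∨ ε = -1) (hη : η = 1 ∨ η = -1)
    (n : ℕ) (hn : 1 ≤ n) :
    (bB ε η n ∈ TLBsub ε n ∧ bB ε η n ≠ 0 ∧ IsIdempotentElem (bB ε η n) ∧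
      s0 ε * bB ε η n = η • bB ε η n ∧ bB ε η n * s0 ε = η • bB ε η n ∧
      ∀ i : ℕ, 1 ≤ i → i ≤ n - 1 →
        UU ε i * bB ε η n = 0 ∧ bB ε η n * UU ε i = 0) ∧
    ∀ x ∈ TLBsub ε n, x ≠ 0 → IsIdempotentElem x →
      s0 ε * x = η • x → x * s0 ε = η • x →
      (∀ i : ℕ, 1 ≤ i → i ≤ n - 1 → UU ε i * x = 0 ∧ x * UU ε i = 0) →
      x = bB ε η n := by
  have hε2 : ε * ε = 1 := by rcases hε with rfl | rfl <;> ring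
  have hη2 : η * η = 1 := by rcases hη with rfl | rfl <;> ring
  obtain ⟨m, rfl⟩ : ∃ m, n = m + 1 := ⟨n - 1, by omega⟩
  obtain ⟨hb, hsL, hsR, hann, habs1, habs2, hsw⟩ := main_ind ε η hε2 hη2 m
  constructor
  · refine ⟨bB_mem ε η (m+1), bB_ne_zero ε η hη2 (m+1), hb, hsL, hsR, ?_⟩
    intro i h1 h2
    exact hann i h1 (by omega)
  · intro x hx hx0 hidem hxsL hxsR hxann
    have h1 : bB ε η (m+1) * x = x := by
      rw [char_left ε η hη2 (m+1) x hxsL (fun i a b => (hxann i a b).1)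
        (bB ε η (m+1)) (bB_mem ε η (m+1)), phi_bB, one_smul]
    have h2 : x * bB ε η (m+1) = phi ε η hη2 x • bB ε η (m+1) :=
      char_left ε η hη2 (m+1) (bB ε η (m+1)) hsL
        (fun i a b => (hann i a (by omega)).1) x hx
    have h3 : x * bB ε η (m+1) = x := by
      rw [char_right ε η hη2 (m+1) x hxsR (fun i a b => (hxann i a b).2)
        (bB ε η (m+1)) (bB_mem ε η (m+1)), phi_bB, one_smul]
    have h4 : x = phi ε η hη2 x • bB ε η (m+1) := by rw [← h2, h3]
    have h5 : phi ε η hη2 x ≠ 0 := by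
      intro h0
      rw [h0, zero_smul] at h4
      exact hx0 h4
    have h6 : phi ε η hη2 x = 1 := by
      have := congrArg (phi ε η hη2) hidem
      rw [map_mul] at this
      exact mul_left_cancel₀ h5 (by rw [this, mul_one])
    rw [h4, h6, one_smul]

end
end
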